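/- arXiv:math/0505246 — 3 statements merged into one kernel-verified Lean document; each statement's English description precedes it below -/
import Mathlib

section
/- Let (X_i)_{i≥1} be i.i.d. real random variables with E[X_1] ∈ (−∞,0), so that T_1, h_1 and H_1 are a.s. well defined. Let M_∞ = sup_{n≥0} S_n and define G(z) = P(M_∞ > z) for z ∈ ℝ. Then for every x ≥ 0, P(M_∞ > x) = P(h_1 > x) + E[ 1_{{h_1 ≤ x}} · G(x + H_1) ]. -/
open MeasureTheory ProbabilityTheory Filter
open scoped ENNReal NNReal

theorem aux_comp_T {Ω : Type*} [MeasurableSpace Ω] {T : Ω → ℕ} (hT : Measurable T)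
    {F : ℕ → Ω → ℝ} (hF : ∀ n, Measurable (F n)) : Measurable fun ω => F (T ω) ω := by
  have h : Measurable fun p : Ω × ℕ => F p.2 p.1 :=
    measurable_from_prod_countable_left fun n => hF n
  exact h.comp (measurable_id.prodMk hT)

theorem aux_block {Ω : Type*} [MeasurableSpace Ω] (P : Measure Ω) [IsProbabilityMeasure P]
    (X : ℕ → Ω → ℝ) (hmeas : ∀ i, Measurable (X i))
    (hindep : iIndepFun X P)
    (hident : ∀ i, IdentDistrib (X i) (X 0) P P)
    (n : ℕ) (fs : Finset ℕ) (t : ℕ → Set ℝ) (ht : ∀ i, MeasurableSet (t i)) :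
    P (⋂ i ∈ fs, X (n + i) ⁻¹' t i) = ∏ i ∈ fs, (P.map (X 0)) (t i) := by
  classical
  have hinj : Function.Injective fun i => n + i := fun a b h => by simpa using h
  have h1 : (⋂ i ∈ fs, X (n + i) ⁻¹' t i)
      = ⋂ j ∈ fs.image (fun i => n + i), X j ⁻¹' t (j - n) := by
    rw [Finset.set_biInter_finset_image]
    refine Set.iInter₂_congr fun i _ => by simp
  rw [h1]
  rw [hindep.meas_biInter (S := fs.image (fun i => n + i))
    (s := fun j => X j ⁻¹' t (j - n)) (fun j _ => ⟨t (j - n), ht _, rfl⟩)]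
  rw [Finset.prod_image (fun a _ b _ h => hinj h)]
  refine Finset.prod_congr rfl fun i _ => ?_
  have h2 : P.map (X (n + i)) = P.map (X 0) := (hident (n + i)).map_eq
  rw [← h2, Measure.map_apply (hmeas _) (by simpa using ht i)]
  simp

theorem aux_seq_law {Ω : Type*} [MeasurableSpace Ω] (P : Measure Ω) [IsProbabilityMeasure P]
    (X : ℕ → Ω → ℝ) (hmeas : ∀ i, Measurable (X i))
    (hindep : iIndepFun X P)
    (hident : ∀ i, IdentDistrib (X i) (X 0) P P) (n : ℕ) :
    P.map (fun ω i => X (n + i) ω) = P.map (fun ω i => X i ω) := by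
  have hW : ∀ m : ℕ, Measurable (fun ω i => X (m + i) ω : Ω → ℕ → ℝ) :=
    fun m => measurable_pi_lambda _ fun i => hmeas (m + i)
  refine ext_of_generate_finite
    (squareCylinders fun _ : ℕ => {s : Set ℝ | MeasurableSet s})
    generateFrom_squareCylinders.symm
    (isPiSystem_squareCylinders (fun _ => MeasurableSpace.isPiSystem_measurableSet) (fun _ => (MeasurableSet.univ : MeasurableSet (Set.univ : Set ℝ))))
    ?_ ?_
  · rintro s ⟨fs, t, htm, rfl⟩
    simp only [Set.mem_univ_pi, Set.mem_setOf_eq] at htm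
    have hpi : MeasurableSet ((fs : Set ℕ).pi t) :=
      MeasurableSet.pi (Finset.countable_toSet fs) fun i _ => htm i
    rw [Measure.map_apply (hW n) hpi, Measure.map_apply (by simpa using hW 0) hpi]
    have hpre : ∀ m : ℕ, ((fun ω i => X (m + i) ω) ⁻¹' (fs : Set ℕ).pi t)
        = ⋂ i ∈ fs, X (m + i) ⁻¹' t i := by
      intro m; ext ω; simp [Set.mem_pi]
    rw [hpre n, aux_block P X hmeas hindep hident n fs t htm]
    have h0 : ((fun ω i => X i ω) ⁻¹' (fs : Set ℕ).pi t) = ⋂ i ∈ fs, X (0 + i) ⁻¹' t i := by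
      ext ω; simp [Set.mem_pi, Nat.zero_add]
    rw [h0, aux_block P X hmeas hindep hident 0 fs t htm]
  · rw [Measure.map_apply (hW n) MeasurableSet.univ,
        Measure.map_apply (measurable_pi_lambda _ fun i => hmeas i) MeasurableSet.univ]
    simp

theorem aux_indep {Ω : Type*} [mΩ : MeasurableSpace Ω] (P : Measure Ω) [IsProbabilityMeasure P]
    (X : ℕ → Ω → ℝ) (hmeas : ∀ i, Measurable (X i))
    (hindep : iIndepFun X P) (n : ℕ) :
    IndepFun (fun ω (i : Fin n) => X i ω) (fun ω (i : ℕ) => X (n + i) ω) P := by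
  have h_le : ∀ i, MeasurableSpace.comap (X i) inferInstance ≤ mΩ :=
    fun i => (hmeas i).comap_le
  have h := indep_iSup_of_disjoint h_le hindep.iIndep
    (S := {i | i < n}) (T := {i | n ≤ i}) (by
      rw [Set.disjoint_left]; intro i hi hi'
      simp only [Set.mem_setOf_eq] at hi hi'; omega)
  rw [IndepFun_iff_Indep]
  have hV : MeasurableSpace.comap (fun ω (i : Fin n) => X i ω) inferInstance ≤
      ⨆ i ∈ {i : ℕ | i < n}, MeasurableSpace.comap (X i) inferInstance := by
    have hm : @Measurable Ω (Fin n → ℝ)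
        (⨆ i ∈ {i : ℕ | i < n}, MeasurableSpace.comap (X i) inferInstance) _
        (fun ω (i : Fin n) => X i ω) := by
      letI : MeasurableSpace Ω := ⨆ i ∈ {i : ℕ | i < n}, MeasurableSpace.comap (X i) inferInstance
      exact measurable_pi_lambda _ fun i =>
        Measurable.mono (measurable_iff_comap_le.2 le_rfl)
          (le_iSup₂ (f := fun (j : ℕ) (_ : j ∈ {i : ℕ | i < n}) =>
            MeasurableSpace.comap (X j) inferInstance) i.1 i.2) le_rfl
    exact measurable_iff_comap_le.1 hm
  have hW : MeasurableSpace.comap (fun ω (i : ℕ) => X (n + i) ω) inferInstance ≤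
      ⨆ i ∈ {i : ℕ | n ≤ i}, MeasurableSpace.comap (X i) inferInstance := by
    have hm : @Measurable Ω (ℕ → ℝ)
        (⨆ i ∈ {i : ℕ | n ≤ i}, MeasurableSpace.comap (X i) inferInstance) _
        (fun ω (i : ℕ) => X (n + i) ω) := by
      letI : MeasurableSpace Ω := ⨆ i ∈ {i : ℕ | n ≤ i}, MeasurableSpace.comap (X i) inferInstance
      exact measurable_pi_lambda _ fun i =>
        Measurable.mono (measurable_iff_comap_le.2 le_rfl)
          (le_iSup₂ (f := fun (j : ℕ) (_ : j ∈ {i : ℕ | n ≤ i}) =>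
            MeasurableSpace.comap (X j) inferInstance) (n + i) (by simp)) le_rfl
    exact measurable_iff_comap_le.1 hm
  exact indep_of_indep_of_le_right (indep_of_indep_of_le_left h hV) hW


/-- Iglehart's identity: for a random walk with finite negative mean, with `M_∞` the all-time
maximum, `h_1` the height of the first excursion above the minimum, `H_1` the first strict
descending ladder height and `G(z) = P(M_∞ > z)`, one has, for every `x ≥ 0`,
`P(M_∞ > x) = P(h_1 > x) + E[1_{h_1 ≤ x} G(x + H_1)]`. -/
theorem iglehart_identity
    {Ω : Type*} [MeasurableSpace Ω] (P : Measure Ω) [IsProbabilityMeasure P]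
    (X : ℕ → Ω → ℝ)
    (hmeas : ∀ i, Measurable (X i))
    (hindep : iIndepFun X P)
    (hident : ∀ i, IdentDistrib (X i) (X 0) P P)
    (hint : Integrable (X 0) P)
    (hmean : ∫ ω, X 0 ω ∂P < 0)
    (S : ℕ → Ω → ℝ) (hS : ∀ n ω, S n ω = ∑ i ∈ Finset.range n, X i ω)
    (T : Ω → ℕ) (hT : ∀ ω, T ω = sInf {n | 1 ≤ n ∧ S n ω < 0})
    (H : Ω → ℝ) (hH : ∀ ω, H ω = -(S (T ω) ω))
    (h1 : Ω → ℝ) (hh1 : ∀ ω, h1 ω = ⨆ n : Fin (T ω + 1), S n.1 ω)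
    (M : Ω → ℝ) (hM : ∀ ω, M ω = ⨆ n : ℕ, S n ω)
    (G : ℝ → ℝ) (hG : ∀ z, G z = (P {ω | z < M ω}).toReal) :
    ∀ x : ℝ, 0 ≤ x →
      (P {ω | x < M ω}).toReal =
        (P {ω | x < h1 ω}).toReal + ∫ ω in {ω | h1 ω ≤ x}, G (x + H ω) ∂P := by
  intro x hx
  -- measurability of partial sums
  have hSm : ∀ n, Measurable (S n) := by
    intro n
    have : S n = fun ω => ∑ i ∈ Finset.range n, X i ω := funext fun ω => hS n ω
    rw [this]
    exact Finset.measurable_sum _ fun i _ => hmeas i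
  -- characterization of T
  have hTchar : ∀ n ω, 1 ≤ n →
      (T ω = n ↔ (S n ω < 0 ∧ ∀ m, 1 ≤ m → m < n → 0 ≤ S m ω)) := by
    intro n ω hn
    rw [hT]
    constructor
    · intro h
      have hne : {m | 1 ≤ m ∧ S m ω < 0}.Nonempty := by
        by_contra hne
        rw [Set.not_nonempty_iff_eq_empty] at hne
        rw [hne, Nat.sInf_empty] at h
        omega
      have hmem := Nat.sInf_mem hne
      rw [h] at hmem
      refine ⟨hmem.2, fun m h1m hmn => ?_⟩
      have := Nat.notMem_of_lt_sInf (h ▸ hmn : m < sInf {m | 1 ≤ m ∧ S m ω < 0})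
      simp only [Set.mem_setOf_eq, not_and, not_lt] at this
      exact this h1m
    · rintro ⟨hS0, hmin⟩
      have hmem : n ∈ {m | 1 ≤ m ∧ S m ω < 0} := ⟨hn, hS0⟩
      have hne : {m | 1 ≤ m ∧ S m ω < 0}.Nonempty := ⟨n, hmem⟩
      have h1' := Nat.sInf_mem hne
      have h2' := Nat.sInf_le hmem
      rcases lt_or_eq_of_le h2' with hlt | heq
      · exfalso
        have := hmin _ h1'.1 hlt
        linarith [h1'.2]
      · exact heq
  have hT0char : ∀ ω, (T ω = 0 ↔ ∀ m, 1 ≤ m → 0 ≤ S m ω) := by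
    intro ω
    rw [hT]
    constructor
    · intro h m h1m
      by_contra hneg
      push_neg at hneg
      have hne : {m | 1 ≤ m ∧ S m ω < 0}.Nonempty := ⟨m, h1m, hneg⟩
      have := Nat.sInf_mem hne
      rw [h] at this
      exact absurd this.1 (by omega)
    · intro h
      have : {m | 1 ≤ m ∧ S m ω < 0} = ∅ := by
        ext m
        simp only [Set.mem_setOf_eq, Set.mem_empty_iff_false, iff_false, not_and, not_lt]
        exact h m
      rw [this, Nat.sInf_empty]
  -- measurability of T
  have hTmeas : Measurable T := by
    refine measurable_to_countable' fun n => ?_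
    rcases Nat.eq_zero_or_pos n with rfl | hn
    · have : T ⁻¹' {0} = ⋂ (m) (_ : 1 ≤ m), {ω | 0 ≤ S m ω} := by
        ext ω
        simp only [Set.mem_preimage, Set.mem_singleton_iff, Set.mem_setOf_eq, Set.mem_iInter,
          hT0char ω]
      rw [this]
      exact MeasurableSet.iInter fun m => MeasurableSet.iInter fun _ =>
        measurableSet_le measurable_const (hSm m)
    · have : T ⁻¹' {n} = {ω | S n ω < 0} ∩ ⋂ (m) (_ : 1 ≤ m) (_ : m < n), {ω | 0 ≤ S m ω} := by
        ext ω
        simp only [Set.mem_preimage, Set.mem_singleton_iff, Set.mem_setOf_eq, Set.mem_inter_iff,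
          Set.mem_iInter, hTchar n ω hn]
      rw [this]
      exact (measurableSet_lt (hSm n) measurable_const).inter
        (MeasurableSet.iInter fun m => MeasurableSet.iInter fun _ => MeasurableSet.iInter fun _ =>
          measurableSet_le measurable_const (hSm m))
  have hHmeas : Measurable H := by
    have : H = fun ω => (fun k ω' => -(S k ω')) (T ω) ω := funext fun ω => hH ω
    rw [this]
    exact aux_comp_T hTmeas fun k => (hSm k).neg
  -- h1 ≤ x characterization
  have h1le : ∀ ω, (h1 ω ≤ x ↔ ∀ k, k ≤ T ω → S k ω ≤ x) := by
    intro ω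
    rw [hh1]
    constructor
    · intro h k hk
      have hle := le_ciSup (f := fun n : Fin (T ω + 1) => S n.1 ω)
        (Set.Finite.bddAbove (Set.finite_range _)) (⟨k, by omega⟩ : Fin (T ω + 1))
      exact le_trans hle h
    · intro h
      exact ciSup_le fun k => h k.1 (by omega)
  have hseth1 : MeasurableSet {ω | h1 ω ≤ x} := by
    have : {ω | h1 ω ≤ x} = ⋃ n, ({ω | T ω = n} ∩ ⋂ (k) (_ : k ≤ n), {ω | S k ω ≤ x}) := by
      ext ω
      simp only [Set.mem_setOf_eq, Set.mem_iUnion, Set.mem_inter_iff, Set.mem_iInter, h1le ω]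
      constructor
      · intro h
        exact ⟨T ω, rfl, fun k hk => h k hk⟩
      · rintro ⟨n, rfl, h⟩
        exact fun k hk => h k hk
    rw [this]
    exact MeasurableSet.iUnion fun n => (hTmeas (measurableSet_singleton n)).inter
      (MeasurableSet.iInter fun k => MeasurableSet.iInter fun _ =>
        measurableSet_le (hSm k) measurable_const)
  -- strong law of large numbers: S tends to -infinity a.s.
  have htend : ∀ᵐ ω ∂P, Tendsto (fun k => S k ω) atTop atBot := by
    have hSLLN := strong_law_ae X hint (fun i j hij => hindep.indepFun hij) hident
    filter_upwards [hSLLN] with ω hω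
    set L := ∫ ω, X 0 ω ∂P with hL
    have hL2 : L < L / 2 := by
      have : L < 0 := hmean
      linarith
    have hL2' : L / 2 < 0 := by
      have : L < 0 := hmean
      linarith
    have hev : ∀ᶠ k : ℕ in atTop,
        (k : ℝ)⁻¹ • ∑ i ∈ Finset.range k, X i ω < L / 2 :=
      hω.eventually_lt_const hL2
    have hev2 : ∀ᶠ k : ℕ in atTop, S k ω ≤ (k : ℝ) * (L / 2) := by
      filter_upwards [hev, eventually_ge_atTop 1] with k hk hk1
      have hkpos : (0 : ℝ) < k := by exact_mod_cast hk1
      have hSk : S k ω = (k : ℝ) * ((k : ℝ)⁻¹ • ∑ i ∈ Finset.range k, X i ω) := by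
        rw [smul_eq_mul, hS]
        field_simp
      rw [hSk]
      exact mul_le_mul_of_nonneg_left hk.le hkpos.le
    refine tendsto_atBot_mono' atTop hev2 ?_
    exact Tendsto.atTop_mul_const_of_neg hL2' tendsto_natCast_atTop_atTop
  have hgood : ∀ᵐ ω ∂P,
      BddAbove (Set.range fun k => S k ω) ∧ 1 ≤ T ω ∧ S (T ω) ω < 0 := by
    filter_upwards [htend] with ω hω
    obtain ⟨N, hN⟩ := eventually_atTop.1 (hω.eventually (eventually_le_atBot (-1)))
    constructor
    · refine ⟨max ((Finset.range (N + 1)).sup' (Finset.nonempty_range_add_one)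
        (fun k => S k ω)) 0, ?_⟩
      rintro _ ⟨k, rfl⟩
      rcases lt_or_ge k (N + 1) with hk | hk
      · exact le_max_of_le_left (Finset.le_sup' (f := fun k => S k ω) (Finset.mem_range.2 hk))
      · have := hN k (by omega)
        exact le_max_of_le_right (by linarith)
    · have hmem : N + 1 ∈ {m | 1 ≤ m ∧ S m ω < 0} :=
        ⟨by omega, by have := hN (N + 1) (by omega); linarith⟩
      have hne : {m | 1 ≤ m ∧ S m ω < 0}.Nonempty := ⟨N + 1, hmem⟩
      have hsmem := Nat.sInf_mem hne
      rw [hT ω]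
      exact ⟨hsmem.1, hsmem.2⟩
  have hbad1 : P {ω | ¬ BddAbove (Set.range fun k => S k ω)} = 0 := by
    have h' : ∀ᵐ ω ∂P, BddAbove (Set.range fun k => S k ω) := hgood.mono fun ω h => h.1
    exact ae_iff.1 h'
  have hT0null : P {ω | T ω = 0} = 0 := by
    have h1T : ∀ᵐ ω ∂P, 1 ≤ T ω := hgood.mono fun ω h => h.2.1
    have h0 := ae_iff.1 h1T
    have : {ω | T ω = 0} = {ω | ¬ 1 ≤ T ω} := by
      ext ω; constructor <;> intro h <;> simp only [Set.mem_setOf_eq] at * <;> omega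
    rw [this]
    exact h0
  -- the tail machinery
  set psum : (ℕ → ℝ) → ℕ → ℝ := fun u m => ∑ i ∈ Finset.range m, u i with hpsum_def
  have hpsum : ∀ m, Measurable fun u => psum u m :=
    fun m => Finset.measurable_sum _ fun i _ => measurable_pi_apply i
  have hbddset : MeasurableSet {u : ℕ → ℝ | BddAbove (Set.range (psum u))} := by
    have : {u : ℕ → ℝ | BddAbove (Set.range (psum u))}
        = ⋃ q : ℚ, ⋂ m, {u | psum u m ≤ (q : ℝ)} := by
      ext u
      simp only [Set.mem_setOf_eq, Set.mem_iUnion, Set.mem_iInter]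
      constructor
      · rintro ⟨b, hb⟩
        obtain ⟨q, hq⟩ := exists_rat_gt b
        exact ⟨q, fun m => le_trans (hb (Set.mem_range_self m)) hq.le⟩
      · rintro ⟨q, hq⟩
        exact ⟨(q : ℝ), by rintro _ ⟨m, rfl⟩; exact hq m⟩
    rw [this]
    exact MeasurableSet.iUnion fun q => MeasurableSet.iInter fun m =>
      measurableSet_le (hpsum m) measurable_const
  set C : ℝ → Set (ℕ → ℝ) :=
    fun z => {u | BddAbove (Set.range (psum u)) ∧ ∃ m, z < psum u m} with hC_def
  have hCmeas : ∀ z, MeasurableSet (C z) := by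
    intro z
    have hCz : C z = {u : ℕ → ℝ | BddAbove (Set.range (psum u))} ∩ ⋃ m, {u | z < psum u m} := by
      ext u
      simp only [hC_def, Set.mem_setOf_eq, Set.mem_inter_iff, Set.mem_iUnion]
    rw [hCz]
    exact hbddset.inter (MeasurableSet.iUnion fun m => measurableSet_lt measurable_const (hpsum m))
  set Xseq : Ω → ℕ → ℝ := fun ω i => X i ω with hXseq_def
  have hXseqm : Measurable Xseq := measurable_pi_lambda _ fun i => hmeas i
  have hXseqpre : ∀ z, Xseq ⁻¹' (C z)
      = {ω | BddAbove (Set.range fun k => S k ω) ∧ ∃ m, z < S m ω} := by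
    intro z
    ext ω
    have hps : psum (Xseq ω) = fun m => S m ω := by
      funext m
      simp only [hpsum_def, hXseq_def, hS]
    simp only [Set.mem_preimage, hC_def, Set.mem_setOf_eq, hps]
  have hMev : ∀ z, 0 ≤ z → {ω | z < M ω} = Xseq ⁻¹' (C z) := by
    intro z hz
    rw [hXseqpre]
    ext ω
    simp only [Set.mem_setOf_eq]
    rw [hM]
    constructor
    · intro h
      by_cases hb : BddAbove (Set.range fun k => S k ω)
      · exact ⟨hb, (lt_ciSup_iff hb).1 h⟩
      · exfalso
        rw [Real.iSup_of_not_bddAbove hb] at h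
        exact absurd h (not_lt.2 hz)
    · rintro ⟨hb, m, hm⟩
      exact lt_of_lt_of_le hm (le_ciSup hb m)
  set κ : ℝ → ℝ≥0∞ := fun z => P (Xseq ⁻¹' (C z)) with hκ_def
  have hκ : ∀ z, 0 ≤ z → P {ω | z < M ω} = κ z := by
    intro z hz
    rw [hMev z hz]
  have hκanti : Antitone κ := by
    intro z1 z2 h
    refine measure_mono (Set.preimage_mono ?_)
    rintro u ⟨hb, m, hm⟩
    exact ⟨hb, m, lt_of_le_of_lt h hm⟩
  have hκmeas : Measurable κ := hκanti.measurable
  have hκle : ∀ z, κ z ≤ 1 := fun z => prob_le_one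
  -- the key identity for each fixed value n of T
  have key : ∀ n, 1 ≤ n →
      P ({ω | x < M ω} ∩ ({ω | h1 ω ≤ x} ∩ {ω | T ω = n}))
        = ∫⁻ ω in {ω | h1 ω ≤ x} ∩ {ω | T ω = n}, κ (x + H ω) ∂P := by
    intro n hn
    classical
    set q : (Fin n → ℝ) → ℕ → ℝ :=
      fun a m => ∑ i ∈ Finset.range m, (if h : i < n then a ⟨i, h⟩ else 0) with hq_def
    have hqm : ∀ m, Measurable fun a => q a m := by
      intro m
      refine Finset.measurable_sum _ fun i _ => ?_
      by_cases h : i < n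
      · simpa [h] using measurable_pi_apply (⟨i, h⟩ : Fin n)
      · simpa [h] using measurable_const
    set Vn : Ω → Fin n → ℝ := fun ω i => X i ω with hVn_def
    set Wn : Ω → ℕ → ℝ := fun ω i => X (n + i) ω with hWn_def
    have hVnm : Measurable Vn := measurable_pi_lambda _ fun i => hmeas i
    have hWnm : Measurable Wn := measurable_pi_lambda _ fun i => hmeas (n + i)
    have hqS : ∀ ω m, m ≤ n → q (Vn ω) m = S m ω := by
      intro ω m hm
      rw [hq_def, hS]
      refine Finset.sum_congr rfl fun i hi => ?_
      have hi' : i < n := lt_of_lt_of_le (Finset.mem_range.1 hi) hm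
      simp [hVn_def, hi']
    set B : Set (Fin n → ℝ) :=
      {a | (∀ m, m ≤ n → q a m ≤ x) ∧ q a n < 0 ∧ ∀ m, 1 ≤ m → m < n → 0 ≤ q a m} with hB_def
    have hBmeas : MeasurableSet B := by
      have hBeq : B = (⋂ (m) (_ : m ≤ n), {a | q a m ≤ x}) ∩
          ({a | q a n < 0} ∩ ⋂ (m) (_ : 1 ≤ m) (_ : m < n), {a | 0 ≤ q a m}) := by
        ext a
        simp only [hB_def, Set.mem_setOf_eq, Set.mem_inter_iff, Set.mem_iInter]
      rw [hBeq]
      exact (MeasurableSet.iInter fun m => MeasurableSet.iInter fun _ =>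
          measurableSet_le (hqm m) measurable_const).inter
        ((measurableSet_lt (hqm n) measurable_const).inter
          (MeasurableSet.iInter fun m => MeasurableSet.iInter fun _ => MeasurableSet.iInter fun _ =>
            measurableSet_le measurable_const (hqm m)))
    have hEn : Vn ⁻¹' B = {ω | h1 ω ≤ x} ∩ {ω | T ω = n} := by
      ext ω
      simp only [Set.mem_preimage, hB_def, Set.mem_setOf_eq, Set.mem_inter_iff]
      constructor
      · rintro ⟨hA, hBn, hCc⟩
        have hTn : T ω = n := by
          refine (hTchar n ω hn).2 ⟨?_, fun m h1m hmn => ?_⟩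
          · rwa [hqS ω n le_rfl] at hBn
          · rw [← hqS ω m (le_of_lt hmn)]
            exact hCc m h1m hmn
        refine ⟨(h1le ω).2 fun k hk => ?_, hTn⟩
        rw [← hqS ω k (hTn ▸ hk)]
        exact hA k (hTn ▸ hk)
      · rintro ⟨hh, hTn⟩
        have h' := (hTchar n ω hn).1 hTn
        refine ⟨fun m hm => ?_, ?_, fun m h1m hmn => ?_⟩
        · rw [hqS ω m hm]
          exact (h1le ω).1 hh m (hTn ▸ hm)
        · rw [hqS ω n le_rfl]
          exact h'.1
        · rw [hqS ω m (le_of_lt hmn)]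
          exact h'.2 m h1m hmn
    have hHq : ∀ ω, T ω = n → H ω = -(q (Vn ω) n) := by
      intro ω hTn
      rw [hH, hTn, hqS ω n le_rfl]
    set D : Set ((Fin n → ℝ) × (ℕ → ℝ)) :=
      {p | p.1 ∈ B ∧ p.2 ∈ C (x + -(q p.1 n))} with hD_def
    have hDmeas : MeasurableSet D := by
      have hDeq : D = {p : (Fin n → ℝ) × (ℕ → ℝ) | p.1 ∈ B} ∩
          ({p | BddAbove (Set.range (psum p.2))} ∩
            ⋃ m, {p | x + -(q p.1 n) < psum p.2 m}) := by
        ext p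
        simp only [hD_def, hC_def, Set.mem_setOf_eq, Set.mem_inter_iff, Set.mem_iUnion]
      rw [hDeq]
      refine (hBmeas.preimage measurable_fst).inter
        ((hbddset.preimage measurable_snd).inter (MeasurableSet.iUnion fun m => ?_))
      exact measurableSet_lt (measurable_const.add ((hqm n).comp measurable_fst).neg)
        ((hpsum m).comp measurable_snd)
    have hpair : Measurable fun ω => (Vn ω, Wn ω) := hVnm.prodMk hWnm
    haveI : IsProbabilityMeasure (P.map Xseq) := Measure.isProbabilityMeasure_map hXseqm.aemeasurable
    have hjoint : P.map (fun ω => (Vn ω, Wn ω)) = (P.map Vn).prod (P.map Wn) :=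
      (indepFun_iff_map_prod_eq_prod_map_map hVnm.aemeasurable hWnm.aemeasurable).1
        (aux_indep P X hmeas hindep n)
    have hWlaw : P.map Wn = P.map Xseq := aux_seq_law P X hmeas hindep hident n
    have hκρ : ∀ z, (P.map Xseq) (C z) = κ z := by
      intro z
      rw [hκ_def, Measure.map_apply hXseqm (hCmeas z)]
    have key1 : P ((fun ω => (Vn ω, Wn ω)) ⁻¹' D)
        = ∫⁻ ω in Vn ⁻¹' B, κ (x + -(q (Vn ω) n)) ∂P := by
      rw [← Measure.map_apply hpair hDmeas, hjoint, hWlaw, Measure.prod_apply hDmeas]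
      have hsec : ∀ a : Fin n → ℝ, (P.map Xseq) (Prod.mk a ⁻¹' D)
          = Set.indicator B (fun a => κ (x + -(q a n))) a := by
        intro a
        by_cases ha : a ∈ B
        · rw [Set.indicator_of_mem ha, ← hκρ]
          congr 1
          ext u
          simp only [hD_def, Set.mem_preimage, Set.mem_setOf_eq, ha, true_and]
        · rw [Set.indicator_of_notMem ha]
          have : Prod.mk a ⁻¹' D = ∅ := by
            ext u
            simp only [hD_def, Set.mem_preimage, Set.mem_setOf_eq, ha, false_and,
              Set.mem_empty_iff_false]
          rw [this, measure_empty]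
      rw [lintegral_congr hsec, lintegral_indicator hBmeas]
      exact setLIntegral_map hBmeas (hκmeas.comp (measurable_const.add (hqm n).neg)) hVnm
    have hEvent : {ω | x < M ω} ∩ (Vn ⁻¹' B) = (fun ω => (Vn ω, Wn ω)) ⁻¹' D := by
      ext ω
      simp only [Set.mem_inter_iff, Set.mem_preimage, Set.mem_setOf_eq, hD_def, hC_def]
      have hpw : ∀ m, psum (Wn ω) m = S (n + m) ω - S n ω := by
        intro m
        have hsr : S (n + m) ω = S n ω + ∑ i ∈ Finset.range m, X (n + i) ω := by
          rw [hS, hS, Finset.sum_range_add]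
        have : psum (Wn ω) m = ∑ i ∈ Finset.range m, X (n + i) ω := by
          rw [hpsum_def, hWn_def]
        rw [this, hsr]
        ring
      have hqn : q (Vn ω) n = S n ω := hqS ω n le_rfl
      constructor
      · rintro ⟨hxM, hB⟩
        have hbdd : BddAbove (Set.range fun k => S k ω) := by
          by_contra hnb
          rw [hM, Real.iSup_of_not_bddAbove hnb] at hxM
          exact absurd hxM (not_lt.2 hx)
        obtain ⟨b, hb⟩ := hbdd
        have hbdd' : BddAbove (Set.range (psum (Wn ω))) := by
          refine ⟨b - S n ω, ?_⟩
          rintro _ ⟨m, rfl⟩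
          rw [hpw m]
          have := hb (Set.mem_range_self (n + m))
          linarith
        refine ⟨hB, hbdd', ?_⟩
        rw [hM] at hxM
        obtain ⟨k, hk⟩ := (lt_ciSup_iff ⟨b, hb⟩).1 hxM
        have hkn : n < k := by
          by_contra hkn
          push_neg at hkn
          have h2 := hB.1 k hkn
          rw [hqS ω k hkn] at h2
          linarith
        refine ⟨k - n, ?_⟩
        rw [hpw (k - n), hqn]
        have hknk : n + (k - n) = k := by omega
        rw [hknk]
        linarith
      · rintro ⟨hB, hbdd', m, hm⟩
        refine ⟨?_, hB⟩
        rw [hpw m, hqn] at hm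
        obtain ⟨b', hb'⟩ := hbdd'
        have hbdd : BddAbove (Set.range fun k => S k ω) := by
          refine ⟨max x (S n ω + b'), ?_⟩
          rintro _ ⟨k, rfl⟩
          rcases le_or_gt k n with hkn | hkn
          · have h2 := hB.1 k hkn
            rw [hqS ω k hkn] at h2
            exact le_max_of_le_left h2
          · have h2 : psum (Wn ω) (k - n) ≤ b' := hb' (Set.mem_range_self _)
            rw [hpw (k - n)] at h2
            have hknk : n + (k - n) = k := by omega
            rw [hknk] at h2
            exact le_max_of_le_right (by linarith)
        rw [hM]
        have hxS : x < S (n + m) ω := by linarith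
        exact lt_of_lt_of_le hxS (le_ciSup hbdd (n + m))
    rw [← hEn, hEvent, key1]
    refine setLIntegral_congr_fun (hBmeas.preimage hVnm) (fun ω hω => ?_)
    have hTn : T ω = n := by
      rw [hEn] at hω
      exact hω.2
    rw [hHq ω hTn]
  -- assembly
  have hMx : MeasurableSet {ω | x < M ω} := by
    rw [hMev x hx]
    exact hXseqm (hCmeas x)
  have hsetTn : ∀ n : ℕ, MeasurableSet {ω | T ω = n} := by
    intro n
    have : {ω | T ω = n} = T ⁻¹' {n} := by ext ω; simp
    rw [this]
    exact hTmeas (measurableSet_singleton n)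
  have hdiff : {ω | x < M ω} \ {ω | h1 ω ≤ x} = {ω | x < M ω} ∩ {ω | x < h1 ω} := by
    ext ω
    simp only [Set.mem_diff, Set.mem_inter_iff, Set.mem_setOf_eq, not_le]
  have hsplit1 : P {ω | x < M ω}
      = P ({ω | x < M ω} ∩ {ω | h1 ω ≤ x}) + P ({ω | x < M ω} ∩ {ω | x < h1 ω}) := by
    rw [← hdiff]
    exact (measure_inter_add_diff _ hseth1).symm
  have hh1M : P ({ω | x < M ω} ∩ {ω | x < h1 ω}) = P {ω | x < h1 ω} := by
    have hsub : {ω | x < h1 ω} \ {ω | x < M ω}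
        ⊆ {ω | ¬ BddAbove (Set.range fun k => S k ω)} := by
      rintro ω ⟨hh, hMω⟩
      simp only [Set.mem_setOf_eq] at hh hMω ⊢
      intro hbdd
      apply hMω
      rw [hh1] at hh
      obtain ⟨k, hk⟩ := exists_lt_of_lt_ciSup hh
      rw [hM]
      exact lt_of_lt_of_le hk (le_ciSup hbdd k.1)
    have h0 : P ({ω | x < h1 ω} \ {ω | x < M ω}) = 0 := measure_mono_null hsub hbad1
    have h2 := measure_inter_add_diff (μ := P) {ω | x < h1 ω} hMx
    rw [h0, add_zero] at h2
    rw [Set.inter_comm]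
    exact h2
  have hpieces : ∀ n : ℕ, MeasurableSet ({ω | x < M ω} ∩ ({ω | h1 ω ≤ x} ∩ {ω | T ω = n})) :=
    fun n => hMx.inter (hseth1.inter (hsetTn n))
  have hdisj : Pairwise (Function.onFun Disjoint
      fun n => {ω | x < M ω} ∩ ({ω | h1 ω ≤ x} ∩ {ω | T ω = n})) := by
    intro i j hij
    rw [Function.onFun, Set.disjoint_left]
    rintro ω ⟨_, _, hi⟩ ⟨_, _, hj⟩
    exact hij (hi.symm.trans hj)
  have hunionM : {ω | x < M ω} ∩ {ω | h1 ω ≤ x}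
      = ⋃ n, ({ω | x < M ω} ∩ ({ω | h1 ω ≤ x} ∩ {ω | T ω = n})) := by
    ext ω
    simp only [Set.mem_inter_iff, Set.mem_iUnion, Set.mem_setOf_eq]
    constructor
    · rintro ⟨a, b⟩
      exact ⟨T ω, a, b, rfl⟩
    · rintro ⟨n, a, b, _⟩
      exact ⟨a, b⟩
  have hsum1 : P ({ω | x < M ω} ∩ {ω | h1 ω ≤ x})
      = ∑' n, P ({ω | x < M ω} ∩ ({ω | h1 ω ≤ x} ∩ {ω | T ω = n})) := by
    conv_lhs => rw [hunionM]
    exact measure_iUnion hdisj hpieces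
  have hpieces2 : ∀ n : ℕ, MeasurableSet ({ω | h1 ω ≤ x} ∩ {ω | T ω = n}) :=
    fun n => hseth1.inter (hsetTn n)
  have hdisj2 : Pairwise (Function.onFun Disjoint
      fun n => {ω | h1 ω ≤ x} ∩ {ω | T ω = n}) := by
    intro i j hij
    rw [Function.onFun, Set.disjoint_left]
    rintro ω ⟨_, hi⟩ ⟨_, hj⟩
    exact hij (hi.symm.trans hj)
  have hunionh1 : {ω | h1 ω ≤ x} = ⋃ n, ({ω | h1 ω ≤ x} ∩ {ω | T ω = n}) := by
    ext ω
    simp only [Set.mem_inter_iff, Set.mem_iUnion, Set.mem_setOf_eq]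
    constructor
    · intro a
      exact ⟨T ω, a, rfl⟩
    · rintro ⟨n, a, _⟩
      exact a
  have hsum2 : ∫⁻ ω in {ω | h1 ω ≤ x}, κ (x + H ω) ∂P
      = ∑' n, ∫⁻ ω in {ω | h1 ω ≤ x} ∩ {ω | T ω = n}, κ (x + H ω) ∂P := by
    conv_lhs => rw [hunionh1]
    exact lintegral_iUnion hpieces2 hdisj2 _
  have hterm : ∀ n, P ({ω | x < M ω} ∩ ({ω | h1 ω ≤ x} ∩ {ω | T ω = n}))
      = ∫⁻ ω in {ω | h1 ω ≤ x} ∩ {ω | T ω = n}, κ (x + H ω) ∂P := by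
    intro n
    rcases Nat.eq_zero_or_pos n with rfl | hn
    · have e1 : P ({ω | x < M ω} ∩ ({ω | h1 ω ≤ x} ∩ {ω | T ω = 0})) = 0 :=
        measure_mono_null (fun ω h => h.2.2) hT0null
      rw [e1]
      symm
      rw [Measure.restrict_eq_zero.2 (measure_mono_null (fun ω h => h.2) hT0null),
        lintegral_zero_measure]
    · exact key n hn
  have hENN : P {ω | x < M ω}
      = P {ω | x < h1 ω} + ∫⁻ ω in {ω | h1 ω ≤ x}, κ (x + H ω) ∂P := by
    rw [hsplit1, hh1M, hsum1, tsum_congr hterm, ← hsum2]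
    exact add_comm _ _
  -- conversion to real numbers
  have hGanti : Antitone G := by
    intro z1 z2 h
    rw [hG, hG]
    exact ENNReal.toReal_mono (measure_ne_top _ _)
      (measure_mono fun ω hω => lt_of_le_of_lt h hω)
  have hGmeas : Measurable G := hGanti.measurable
  have haeeq : ∀ᵐ ω ∂P, ENNReal.ofReal (G (x + H ω)) = κ (x + H ω) := by
    filter_upwards [hgood] with ω hω
    have hHpos : 0 < H ω := by
      rw [hH]
      linarith [hω.2.2]
    have hz : 0 ≤ x + H ω := by linarith
    rw [hG, ← hκ (x + H ω) hz]
    exact ENNReal.ofReal_toReal (measure_ne_top _ _)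
  have hlfin : ∫⁻ ω in {ω | h1 ω ≤ x}, κ (x + H ω) ∂P ≠ ⊤ := by
    refine ne_of_lt (lt_of_le_of_lt (lintegral_mono fun ω => hκle _) ?_)
    rw [setLIntegral_one]
    exact measure_lt_top P _
  have hintG : ∫ ω in {ω | h1 ω ≤ x}, G (x + H ω) ∂P
      = (∫⁻ ω in {ω | h1 ω ≤ x}, κ (x + H ω) ∂P).toReal := by
    rw [integral_eq_lintegral_of_nonneg_ae]
    · congr 1
      exact lintegral_congr_ae (ae_restrict_of_ae haeeq)
    · refine ae_of_all _ fun ω => ?_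
      show (0 : ℝ) ≤ G (x + H ω)
      rw [hG]
      exact ENNReal.toReal_nonneg
    · exact (hGmeas.comp (measurable_const.add hHmeas)).aestronglyMeasurable
  rw [hintG, hENN, ENNReal.toReal_add (measure_ne_top _ _) hlfin]
end

section
/- Let μ be a probability measure on [0,∞) and U = Σ_{n=0}^∞ μ^{*n} its renewal measure. Then for all x ≥ 0 and h ≥ 0, U((x, x+h]) ≤ U([0, h]). -/
open MeasureTheory

lemma my_conv_apply (ν μ : Measure ℝ) [SFinite ν] [SFinite μ] {S : Set ℝ}
    (hS : MeasurableSet S) :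
    ν.conv μ S = ∫⁻ z, μ {y | z + y ∈ S} ∂ν := by
  rw [Measure.conv, Measure.map_apply (by fun_prop) hS,
    Measure.prod_apply (hS.preimage (by fun_prop))]
  rfl

lemma my_conv_assoc (κ ν μ : Measure ℝ) [SFinite κ] [SFinite ν] [SFinite μ] :
    (κ.conv ν).conv μ = κ.conv (ν.conv μ) := by
  show Measure.map _ ((Measure.map _ (κ.prod ν)).prod μ)
      = Measure.map _ (κ.prod (Measure.map _ (ν.prod μ)))
  rw [← Measure.map_id (μ := μ), Measure.map_prod_map _ _ (by fun_prop) measurable_id,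
    ← Measure.map_id (μ := κ), Measure.map_prod_map _ _ measurable_id (by fun_prop),
    Measure.map_map (by fun_prop) (by fun_prop), Measure.map_map (by fun_prop) (by fun_prop),
    ← Measure.prodAssoc_prod, Measure.map_map (by fun_prop) (by fun_prop),
    Measure.map_id, Measure.map_id]
  congr 1
  ext p
  simp [MeasurableEquiv.prodAssoc, Function.comp, add_assoc]

lemma my_conv_null_Iic (ν μ : Measure ℝ) [SFinite ν] [SFinite μ] {a : ℝ}
    (hν : ν (Set.Iic a) = 0) (hμ : μ (Set.Iio 0) = 0) :
    ν.conv μ (Set.Iic a) = 0 := by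
  rw [my_conv_apply _ _ measurableSet_Iic]
  have h : ∀ᵐ z ∂ν, μ {y | z + y ∈ Set.Iic a} = 0 := by
    filter_upwards [(measure_eq_zero_iff_ae_notMem).mp hν] with z hz
    refine measure_mono_null (fun y hy => ?_) hμ
    simp only [Set.mem_Iic, Set.mem_setOf_eq] at hz hy ⊢
    push_neg at hz
    simp only [Set.mem_Iio]
    linarith
  rw [lintegral_congr_ae h, lintegral_zero]

lemma my_conv_null_Iio (ν μ : Measure ℝ) [SFinite ν] [SFinite μ]
    (hν : ν (Set.Iio 0) = 0) (hμ : μ (Set.Iio 0) = 0) :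
    ν.conv μ (Set.Iio 0) = 0 := by
  rw [my_conv_apply _ _ measurableSet_Iio]
  have h : ∀ᵐ z ∂ν, μ {y | z + y ∈ Set.Iio 0} = 0 := by
    filter_upwards [(measure_eq_zero_iff_ae_notMem).mp hν] with z hz
    refine measure_mono_null (fun y hy => ?_) hμ
    simp only [Set.mem_Iio, Set.mem_setOf_eq] at hz hy ⊢
    push_neg at hz
    linarith
  rw [lintegral_congr_ae h, lintegral_zero]

lemma my_sum_conv (s : Finset ℕ) (f : ℕ → Measure ℝ) (hf : ∀ j, IsFiniteMeasure (f j))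
    (μ : Measure ℝ) [SFinite μ] :
    (∑ j ∈ s, f j).conv μ = ∑ j ∈ s, (f j).conv μ := by
  classical
  induction s using Finset.induction_on with
  | empty => simp
  | insert a s' hj ih =>
    haveI := hf a
    haveI : IsFiniteMeasure (∑ j ∈ s', f j) := by
      constructor
      simp only [Measure.coe_finset_sum, Finset.sum_apply]
      exact ENNReal.sum_lt_top.mpr fun j _ => measure_lt_top _ _
    rw [Finset.sum_insert hj, Measure.add_conv, ih, Finset.sum_insert hj]

lemma my_tsum_shift (F : ℕ × ℕ → ENNReal) :
    ∑' m, ∑ j ∈ Finset.range m, F (j, m - 1 - j) ≤ ∑' p, F p := by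
  rw [ENNReal.tsum_eq_iSup_sum]
  refine iSup_le fun T => ?_
  obtain ⟨N, hN⟩ := T.exists_nat_subset_range
  calc ∑ m ∈ T, ∑ j ∈ Finset.range m, F (j, m - 1 - j)
      ≤ ∑ m ∈ Finset.range N, ∑ j ∈ Finset.range m, F (j, m - 1 - j) :=
        Finset.sum_le_sum_of_subset hN
    _ = ∑ q ∈ (Finset.range N).sigma (fun m => Finset.range m), F (q.2, q.1 - 1 - q.2) := by
        rw [Finset.sum_sigma]
    _ = ∑ p ∈ ((Finset.range N).sigma (fun m => Finset.range m)).image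
          (fun q => ((q.2 : ℕ), q.1 - 1 - q.2)), F p := by
        rw [Finset.sum_image]
        rintro ⟨m, j⟩ hq ⟨m', j'⟩ hq' heq
        simp only [Finset.mem_coe, Finset.mem_sigma, Finset.mem_range] at hq hq'
        simp only [Prod.mk.injEq] at heq
        obtain ⟨h1, h2⟩ := heq
        have : m = m' := by omega
        subst this; subst h1; rfl
    _ ≤ ∑' p, F p := ENNReal.sum_le_tsum _

/-- Subadditivity-type bound for a renewal measure: if `μ` is a probability measure on
`[0,∞)` and `U = Σ_{n≥0} μ^{*n}` is its renewal measure, then for all `x ≥ 0` and `h ≥ 0`,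
`U((x, x+h]) ≤ U([0, h])`. -/
theorem renewal_measure_interval_bound
    (μ : Measure ℝ) [IsProbabilityMeasure μ]
    (hsupp : μ (Set.Iio 0) = 0)
    (μpow : ℕ → Measure ℝ)
    (hpow0 : μpow 0 = Measure.dirac 0)
    (hpowsucc : ∀ n, μpow (n + 1) = (μpow n).conv μ)
    (U : Measure ℝ) (hU : U = Measure.sum μpow) :
    ∀ x : ℝ, 0 ≤ x → ∀ h : ℝ, 0 ≤ h →
      U (Set.Ioc x (x + h)) ≤ U (Set.Icc 0 h) := by
  classical
  intro x hx h hh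
  have hprob : ∀ n, IsProbabilityMeasure (μpow n) := by
    intro n
    induction n with
    | zero => rw [hpow0]; infer_instance
    | succ n ih => rw [hpowsucc]; exact Measure.probabilitymeasure_of_probabilitymeasures_conv _ _
  have hsuppn : ∀ n, μpow n (Set.Iio 0) = 0 := by
    intro n
    induction n with
    | zero => rw [hpow0]; simp
    | succ n ih =>
      haveI := hprob n
      rw [hpowsucc n]
      exact my_conv_null_Iio _ _ ih hsupp
  set ρ : ℕ → Measure ℝ :=
    fun j => (((μpow j).restrict (Set.Iic x)).conv μ).restrict (Set.Ioi x) with hρ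
  have hρfin : ∀ j, IsFiniteMeasure (ρ j) := by
    intro j; haveI := hprob j; rw [hρ]; infer_instance
  have hρ_Iic : ∀ j, ρ j (Set.Iic x) = 0 := by
    intro j
    rw [hρ]
    simp only [Measure.restrict_apply measurableSet_Iic]
    rw [Set.Iic_inter_Ioi, Set.Ioc_self, measure_empty]
  -- the first-passage decomposition
  have key : ∀ m, μpow m = (μpow m).restrict (Set.Iic x)
      + ∑ j ∈ Finset.range m, (ρ j).conv (μpow (m - 1 - j)) := by
    intro m
    induction m with
    | zero =>
      rw [hpow0]
      simp only [Finset.range_zero, Finset.sum_empty, add_zero]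
      rw [MeasureTheory.restrict_dirac]
      simp [hx]
    | succ m ih =>
      haveI := hprob m
      have expand : μpow (m + 1) = ((μpow m).restrict (Set.Iic x)).conv μ
          + ∑ j ∈ Finset.range m, (ρ j).conv (μpow (m - j)) := by
        conv_lhs => rw [hpowsucc m, ih]
        rw [Measure.add_conv, my_sum_conv _ _ (fun j => by haveI := hρfin j; haveI := hprob (m-1-j); infer_instance)]
        congr 1
        refine Finset.sum_congr rfl fun j hj => ?_
        haveI := hρfin j
        haveI := hprob (m - 1 - j)
        rw [my_conv_assoc, ← hpowsucc]
        congr 2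
        have := Finset.mem_range.mp hj
        omega
      have hsum_null : (∑ j ∈ Finset.range m, (ρ j).conv (μpow (m - j))) (Set.Iic x) = 0 := by
        simp only [Measure.coe_finset_sum, Finset.sum_apply]
        refine Finset.sum_eq_zero fun j _ => ?_
        haveI := hρfin j
        haveI := hprob (m - j)
        exact my_conv_null_Iic _ _ (hρ_Iic j) (hsuppn _)
      have hres : (((μpow m).restrict (Set.Iic x)).conv μ).restrict (Set.Iic x)
          = (μpow (m + 1)).restrict (Set.Iic x) := by
        conv_rhs => rw [expand]
        rw [Measure.restrict_add, Measure.restrict_eq_zero.mpr hsum_null, add_zero]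
      calc μpow (m + 1)
          = ((μpow m).restrict (Set.Iic x)).conv μ
            + ∑ j ∈ Finset.range m, (ρ j).conv (μpow (m - j)) := expand
        _ = ((((μpow m).restrict (Set.Iic x)).conv μ).restrict (Set.Iic x)
            + (((μpow m).restrict (Set.Iic x)).conv μ).restrict (Set.Ioi x))
            + ∑ j ∈ Finset.range m, (ρ j).conv (μpow (m - j)) := by
            rw [← Set.compl_Iic, Measure.restrict_add_restrict_compl measurableSet_Iic]
        _ = (μpow (m + 1)).restrict (Set.Iic x)
            + ∑ j ∈ Finset.range (m + 1), (ρ j).conv (μpow (m + 1 - 1 - j)) := by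
            rw [hres, Finset.sum_range_succ]
            have hlast : (ρ m).conv (μpow (m + 1 - 1 - m)) = ρ m := by
              haveI := hρfin m
              have : m + 1 - 1 - m = 0 := by omega
              rw [this, hpow0]; simp
            rw [hlast]
            have hre : ∀ j ∈ Finset.range m, (ρ j).conv (μpow (m - j))
                = (ρ j).conv (μpow (m + 1 - 1 - j)) := by
              intro j hj
              rfl
            rw [Finset.sum_congr rfl hre]
            abel
  -- telescoping masses
  have hmass : ∀ j, ρ j Set.univ + μpow (j + 1) (Set.Iic x) = μpow j (Set.Iic x) := by
    intro j
    haveI := hprob j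
    have hL : (((μpow j).restrict (Set.Iic x)).conv μ) Set.univ = μpow j (Set.Iic x) := by
      rw [my_conv_apply _ _ MeasurableSet.univ]
      simp [measure_univ]
    have hX : (((μpow j).restrict (Set.Iic x)).conv μ) (Set.Iic x)
        = μpow (j + 1) (Set.Iic x) := by
      have hd : μpow (j + 1) = ((μpow j).restrict (Set.Iic x)).conv μ
          + ((μpow j).restrict (Set.Ioi x)).conv μ := by
        rw [hpowsucc j]
        conv_lhs => rw [← Measure.restrict_add_restrict_compl (μ := μpow j) (s := Set.Iic x) measurableSet_Iic]
        rw [Set.compl_Iic, Measure.add_conv]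
      rw [hd, Measure.add_apply]
      have h0 : (((μpow j).restrict (Set.Ioi x)).conv μ) (Set.Iic x) = 0 := by
        refine my_conv_null_Iic _ _ ?_ hsupp
        rw [Measure.restrict_apply measurableSet_Iic, Set.Iic_inter_Ioi, Set.Ioc_self,
          measure_empty]
      rw [h0, add_zero]
    have hsplit := Measure.restrict_add_restrict_compl
      (μ := ((μpow j).restrict (Set.Iic x)).conv μ) (s := Set.Iic x) measurableSet_Iic
    rw [Set.compl_Iic] at hsplit
    have := congrArg (fun ν : Measure ℝ => ν Set.univ) hsplit
    simp only [Measure.add_apply, Measure.restrict_apply_univ] at this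
    rw [hL, hX] at this
    rw [← this, hρ]
    simp only [Measure.restrict_apply_univ]
    exact add_comm _ _
  have htel : ∀ N, ∑ j ∈ Finset.range N, ρ j Set.univ + μpow N (Set.Iic x)
      = μpow 0 (Set.Iic x) := by
    intro N
    induction N with
    | zero => simp
    | succ N ih => rw [Finset.sum_range_succ, ← ih, ← hmass N]; ring
  have hb0 : μpow 0 (Set.Iic x) = 1 := by
    rw [hpow0, Measure.dirac_apply' _ measurableSet_Iic]
    simp [hx]
  have hρsum : ∑' j, ρ j Set.univ ≤ 1 := by
    rw [ENNReal.tsum_eq_iSup_sum]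
    refine iSup_le fun T => ?_
    obtain ⟨N, hN⟩ := T.exists_nat_subset_range
    calc ∑ j ∈ T, ρ j Set.univ ≤ ∑ j ∈ Finset.range N, ρ j Set.univ :=
          Finset.sum_le_sum_of_subset hN
      _ ≤ ∑ j ∈ Finset.range N, ρ j Set.univ + μpow N (Set.Iic x) := le_self_add
      _ = 1 := by rw [htel, hb0]
  -- per-term bound
  have hterm : ∀ j k, (ρ j).conv (μpow k) (Set.Ioc x (x + h))
      ≤ ρ j Set.univ * μpow k (Set.Icc 0 h) := by
    intro j k
    haveI := hρfin j
    haveI := hprob k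
    rw [my_conv_apply _ _ measurableSet_Ioc]
    have hb : ∀ᵐ z ∂(ρ j), μpow k {y | z + y ∈ Set.Ioc x (x + h)}
        ≤ μpow k (Set.Icc 0 h) := by
      rw [hρ]
      filter_upwards [ae_restrict_mem measurableSet_Ioi] with z hz
      have hsub : {y | z + y ∈ Set.Ioc x (x + h)} ⊆ Set.Icc 0 h ∪ Set.Iio 0 := by
        intro y hy
        simp only [Set.mem_Ioc, Set.mem_setOf_eq] at hy
        simp only [Set.mem_Ioi] at hz
        rcases le_or_gt 0 y with h0 | h0
        · exact Or.inl ⟨h0, by linarith⟩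
        · exact Or.inr h0
      calc μpow k {y | z + y ∈ Set.Ioc x (x + h)}
          ≤ μpow k (Set.Icc 0 h ∪ Set.Iio 0) := measure_mono hsub
        _ ≤ μpow k (Set.Icc 0 h) + μpow k (Set.Iio 0) := measure_union_le _ _
        _ = μpow k (Set.Icc 0 h) := by rw [hsuppn k, add_zero]
    calc ∫⁻ z, μpow k {y | z + y ∈ Set.Ioc x (x + h)} ∂(ρ j)
        ≤ ∫⁻ _, μpow k (Set.Icc 0 h) ∂(ρ j) := lintegral_mono_ae hb
      _ = ρ j Set.univ * μpow k (Set.Icc 0 h) := by rw [lintegral_const, mul_comm]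
  -- assemble
  have hm : ∀ m, μpow m (Set.Ioc x (x + h))
      = ∑ j ∈ Finset.range m, (ρ j).conv (μpow (m - 1 - j)) (Set.Ioc x (x + h)) := by
    intro m
    conv_lhs => rw [key m]
    rw [Measure.add_apply, Measure.restrict_apply measurableSet_Ioc]
    have : Set.Ioc x (x + h) ∩ Set.Iic x = ∅ := by
      ext y; simp only [Set.mem_inter_iff, Set.mem_Ioc, Set.mem_Iic, Set.mem_empty_iff_false,
        iff_false]
      rintro ⟨⟨h1, _⟩, h2⟩; linarith
    rw [this, measure_empty, zero_add]
    simp [Measure.coe_finset_sum, Finset.sum_apply]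
  rw [hU, Measure.sum_apply _ measurableSet_Ioc, Measure.sum_apply _ measurableSet_Icc]
  calc ∑' m, μpow m (Set.Ioc x (x + h))
      = ∑' m, ∑ j ∈ Finset.range m, (ρ j).conv (μpow (m - 1 - j)) (Set.Ioc x (x + h)) := by
        exact tsum_congr hm
    _ ≤ ∑' m, ∑ j ∈ Finset.range m, ρ j Set.univ * μpow (m - 1 - j) (Set.Icc 0 h) :=
        ENNReal.tsum_le_tsum fun m => Finset.sum_le_sum fun j _ => hterm j (m - 1 - j)
    _ ≤ ∑' p : ℕ × ℕ, ρ p.1 Set.univ * μpow p.2 (Set.Icc 0 h) :=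
        my_tsum_shift (fun p => ρ p.1 Set.univ * μpow p.2 (Set.Icc 0 h))
    _ = (∑' j, ρ j Set.univ) * ∑' k, μpow k (Set.Icc 0 h) := by
        rw [ENNReal.tsum_prod (f := fun j k => ρ j Set.univ * μpow k (Set.Icc 0 h))]
        simp_rw [ENNReal.tsum_mul_left]
        rw [ENNReal.tsum_mul_right]
    _ ≤ 1 * ∑' k, μpow k (Set.Icc 0 h) := by
        exact mul_le_mul_left hρsum _
    _ = ∑' k, μpow k (Set.Icc 0 h) := one_mul _
end

section
/- Let μ be a probability measure on [0,∞) with μ({0}) < 1, and let U = Σ_{n=0}^∞ μ^{*n} be its renewal measure. Then U([0,1]) < ∞ and for every h ≥ 0, U([0,h]) ≤ (⌊h⌋ + 1) · U([0,1]); in particular U([0,h]) grows at most linearly in h. -/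
open MeasureTheory

private lemma lconv (ν ρ : Measure ℝ) [SFinite ν] [SFinite ρ] {f : ℝ → ENNReal}
    (hf : Measurable f) :
    ∫⁻ s, f s ∂(ν.conv ρ) = ∫⁻ x, ∫⁻ y, f (x + y) ∂ρ ∂ν := by
  rw [show ν.conv ρ = Measure.map (fun p : ℝ × ℝ => p.1 + p.2) (ν.prod ρ) from rfl,
    lintegral_map hf measurable_add,
    lintegral_prod (fun z : ℝ × ℝ => f (z.1 + z.2)) ((hf.comp measurable_add).aemeasurable)]

private lemma measInt (ν : Measure ℝ) [SFinite ν] {g : ℝ → ENNReal} (hg : Measurable g) :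
    Measurable fun x => ∫⁻ y, g (x + y) ∂ν :=
  Measurable.lintegral_prod_right' (f := fun p : ℝ × ℝ => g (p.1 + p.2))
    (hg.comp measurable_add)

private lemma renewal_aux_fin
    (μ : Measure ℝ) [IsProbabilityMeasure μ]
    (hsupp : μ (Set.Iio 0) = 0)
    (hzero : μ {0} < 1)
    (μpow : ℕ → Measure ℝ)
    (hpow0 : μpow 0 = Measure.dirac 0)
    (hpowsucc : ∀ n, μpow (n + 1) = (μpow n).conv μ)
    (U : Measure ℝ) (hU : U = Measure.sum μpow) :
    U (Set.Icc 0 1) < ⊤ := by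
  have hprob : ∀ n, IsProbabilityMeasure (μpow n) := by
    intro n
    induction n with
    | zero => rw [hpow0]; infer_instance
    | succ n ih => rw [hpowsucc n]; exact Measure.probabilitymeasure_of_probabilitymeasures_conv _ _
  -- find c with laplace transform < 1
  set g : ℕ → ℝ → ENNReal := fun n x => if x < 0 then 1 else ENNReal.ofReal (Real.exp (-(n * x))) with hg
  have hgmeas : ∀ n, Measurable (g n) := by
    intro n
    exact Measurable.ite measurableSet_Iio measurable_const
      (ENNReal.measurable_ofReal.comp ((measurable_const.mul measurable_id).neg.exp))
  have hganti : Antitone g := by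
    intro m n hmn x
    simp only [hg]
    split
    · exact le_refl _
    · rename_i hx
      push_neg at hx
      apply ENNReal.ofReal_le_ofReal
      apply Real.exp_le_exp.2
      nlinarith [(Nat.cast_le (α := ℝ)).2 hmn]
  have hg0 : ∀ x, g 0 x = 1 := by
    intro x; simp [hg]
  have hiInfg : ∀ x, (⨅ n, g n x) = Set.indicator (Set.Iic 0) 1 x := by
    intro x
    rcases lt_trichotomy x 0 with hx | hx | hx
    · have : ∀ n, g n x = 1 := fun n => by simp [hg, hx]
      simp [this, Set.indicator_of_mem (Set.mem_Iic.2 hx.le)]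
    · subst hx
      have : ∀ n, g n (0:ℝ) = 1 := fun n => by simp [hg]
      simp [this]
    · have hxn : x ∉ Set.Iic (0:ℝ) := by simp [hx]
      rw [Set.indicator_of_notMem hxn]
      rw [show (0:ENNReal) = ⊥ from rfl, iInf_eq_bot]
      intro b hb
      rcases eq_or_ne b ⊤ with rfl | hbt
      · exact ⟨0, by rw [hg0]; exact ENNReal.one_lt_top⟩
      · have hb0 : 0 < b.toReal := ENNReal.toReal_pos (ne_of_gt hb) hbt
        obtain ⟨n, hn⟩ := exists_pow_lt_of_lt_one hb0 (Real.exp_lt_one_iff.2 (neg_lt_zero.2 hx))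
        refine ⟨n, ?_⟩
        have : g n x = ENNReal.ofReal (Real.exp (-x) ^ n) := by
          simp only [hg, if_neg (not_lt.2 hx.le)]
          rw [← Real.exp_nat_mul]
          ring_nf
        rw [this]
        calc ENNReal.ofReal (Real.exp (-x) ^ n) < ENNReal.ofReal b.toReal :=
              ENNReal.ofReal_lt_ofReal_iff hb0 |>.2 hn
          _ = b := ENNReal.ofReal_toReal hbt
  have hIic : μ (Set.Iic 0) = μ {0} := by
    have : Set.Iic (0:ℝ) = Set.Iio 0 ∪ {0} := by
      ext x; simp [le_iff_lt_or_eq]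
    rw [this]
    refine le_antisymm ((measure_union_le _ _).trans ?_) (measure_mono Set.subset_union_right)
    rw [hsupp, zero_add]
  have hinf : (⨅ n, ∫⁻ x, g n x ∂μ) < 1 := by
    rw [← lintegral_iInf hgmeas hganti (by simp [hg0])]
    calc ∫⁻ x, ⨅ n, g n x ∂μ = ∫⁻ x, Set.indicator (Set.Iic 0) 1 x ∂μ := by
          exact lintegral_congr hiInfg
      _ = μ (Set.Iic 0) := by rw [lintegral_indicator measurableSet_Iic]; simp
      _ = μ {0} := hIic
      _ < 1 := hzero
  obtain ⟨c, hc⟩ := iInf_lt_iff.1 hinf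
  set F : ℝ → ENNReal := fun x => ENNReal.ofReal (Real.exp (-(c * x))) with hF
  have hFmeas : Measurable F :=
    ENNReal.measurable_ofReal.comp ((measurable_const.mul measurable_id).neg.exp)
  set r : ENNReal := ∫⁻ x, F x ∂μ with hr
  have hrlt : r < 1 := by
    have : r = ∫⁻ x, g c x ∂μ := by
      apply lintegral_congr_ae
      filter_upwards [(ae_iff.2 (by simpa [Set.Iio_def] using hsupp) : ∀ᵐ x ∂μ, 0 ≤ x)] with x hx
      simp [hg, hF, not_lt.2 hx]
    rw [this]; exact hc
  have hpowint : ∀ n, ∫⁻ x, F x ∂(μpow n) = r ^ n := by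
    intro n
    induction n with
    | zero =>
      rw [hpow0, lintegral_dirac' _ hFmeas]
      simp [hF]
    | succ n ih =>
      haveI := hprob n
      rw [hpowsucc n, lconv _ _ hFmeas]
      have : ∀ x : ℝ, ∫⁻ y, F (x + y) ∂μ = F x * r := by
        intro x
        rw [hr, ← lintegral_const_mul _ hFmeas]
        apply lintegral_congr
        intro y
        simp only [hF]
        rw [← ENNReal.ofReal_mul (Real.exp_nonneg _), ← Real.exp_add]
        ring_nf
      simp_rw [this]
      rw [lintegral_mul_const _ hFmeas, ih]
      ring
  have hbound : ∀ n, μpow n (Set.Icc 0 1) ≤ ENNReal.ofReal (Real.exp c) * r ^ n := by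
    intro n
    haveI := hprob n
    have h1 : μpow n (Set.Icc 0 1) = ∫⁻ x, Set.indicator (Set.Icc 0 1) 1 x ∂(μpow n) := by
      rw [lintegral_indicator measurableSet_Icc]; simp
    rw [h1, ← hpowint n, ← lintegral_const_mul _ hFmeas]
    apply lintegral_mono
    intro x
    by_cases hx : x ∈ Set.Icc (0:ℝ) 1
    · rw [Set.indicator_of_mem hx]
      simp only [hF, Pi.one_apply]
      rw [← ENNReal.ofReal_mul (Real.exp_nonneg _), ← Real.exp_add]
      apply ENNReal.one_le_ofReal.2
      rw [← Real.exp_zero]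
      apply Real.exp_le_exp.2
      nlinarith [hx.1, hx.2, Nat.cast_nonneg (α := ℝ) c]
    · rw [Set.indicator_of_notMem hx]; exact zero_le
  rw [hU, Measure.sum_apply _ measurableSet_Icc]
  calc ∑' n, μpow n (Set.Icc 0 1) ≤ ∑' n, ENNReal.ofReal (Real.exp c) * r ^ n :=
        ENNReal.tsum_le_tsum hbound
    _ = ENNReal.ofReal (Real.exp c) * (1 - r)⁻¹ := by
        rw [ENNReal.tsum_mul_left, ENNReal.tsum_geometric]
    _ < ⊤ := by
        apply ENNReal.mul_lt_top ENNReal.ofReal_lt_top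
        rw [ENNReal.inv_lt_top]
        exact tsub_pos_of_lt hrlt

set_option maxHeartbeats 1000000 in
private lemma renewal_aux_shift
    (μ : Measure ℝ) [IsProbabilityMeasure μ]
    (hsupp : μ (Set.Iio 0) = 0)
    (μpow : ℕ → Measure ℝ)
    (hpow0 : μpow 0 = Measure.dirac 0)
    (hpowsucc : ∀ n, μpow (n + 1) = (μpow n).conv μ)
    (U : Measure ℝ) (hU : U = Measure.sum μpow)
    (t : ℝ) (ht : 0 < t) :
    U (Set.Icc t (t+1)) ≤ U (Set.Icc 0 1) := by
  have hprob : ∀ n, IsProbabilityMeasure (μpow n) := by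
    intro n
    induction n with
    | zero => rw [hpow0]; infer_instance
    | succ n ih => rw [hpowsucc n]; exact Measure.probabilitymeasure_of_probabilitymeasures_conv _ _
  have haeμ : ∀ᵐ y ∂μ, 0 ≤ y := by
    rw [ae_iff]; simpa [Set.Iio_def] using hsupp
  have hnonneg : ∀ n, μpow n (Set.Iio 0) = 0 := by
    intro n
    induction n with
    | zero => rw [hpow0, Measure.dirac_apply' _ measurableSet_Iio]; simp
    | succ n ih =>
      haveI := hprob n
      have hae : ∀ᵐ x ∂μpow n, 0 ≤ x := by rw [ae_iff]; simpa [Set.Iio_def] using ih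
      have hind : Measurable (Set.indicator (Set.Iio (0:ℝ)) (1 : ℝ → ENNReal)) :=
        measurable_const.indicator measurableSet_Iio
      rw [hpowsucc n, ← lintegral_indicator_one measurableSet_Iio, lconv _ _ hind]
      have : ∀ᵐ x ∂μpow n, (∫⁻ y, Set.indicator (Set.Iio (0:ℝ)) 1 (x + y) ∂μ) = 0 := by
        filter_upwards [hae] with x hx
        rw [lintegral_eq_zero_iff
          (show Measurable fun y : ℝ => Set.indicator (Set.Iio (0:ℝ)) 1 (x + y) from
            hind.comp (measurable_const.add measurable_id))]
        filter_upwards [haeμ] with y hy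
        exact Set.indicator_of_notMem (by simp; linarith) _
      rw [lintegral_congr_ae this, lintegral_zero]
  have hae : ∀ n, ∀ᵐ x ∂μpow n, 0 ≤ x := by
    intro n; rw [ae_iff]; simpa [Set.Iio_def] using hnonneg n
  -- the key decomposition
  have KC : ∀ n (g : ℝ → ENNReal), Measurable g →
      ∫⁻ s, (if t ≤ s then g s else 0) ∂μpow n =
      ∑ k ∈ Finset.range n, ∫⁻ x, ∫⁻ y,
        (if x < t ∧ t ≤ x + y then ∫⁻ z, g (x + y + z) ∂μpow (n - 1 - k) else 0) ∂μ ∂μpow k := by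
    intro n
    induction n with
    | zero =>
      intro g hg
      rw [hpow0, lintegral_dirac' _ (Measurable.ite measurableSet_Ici hg measurable_const)]
      simp [not_le.2 ht]
    | succ n ih =>
      intro g hg
      haveI := hprob n
      have hϕ : Measurable (fun s => if t ≤ s then g s else 0) :=
        Measurable.ite measurableSet_Ici hg measurable_const
      rw [hpowsucc n, lconv _ _ hϕ]
      set G : ℝ → ENNReal := fun x => ∫⁻ y, (if t ≤ x + y then g (x + y) else 0) ∂μ with hGdef
      have hG : Measurable G := measInt μ hϕ
      have hsplit : ∫⁻ x, G x ∂μpow n =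
          (∫⁻ x, (if t ≤ x then G x else 0) ∂μpow n) +
          ∫⁻ x, (if x < t then G x else 0) ∂μpow n := by
        rw [← lintegral_add_left (Measurable.ite measurableSet_Ici hG measurable_const)]
        apply lintegral_congr
        intro x
        rcases le_or_gt t x with h | h
        · simp [h, not_lt.2 h]
        · simp [h, not_le.2 h]
      have termA : ∫⁻ x, (if t ≤ x then G x else 0) ∂μpow n =
          ∑ k ∈ Finset.range n, ∫⁻ x, ∫⁻ y,
            (if x < t ∧ t ≤ x + y then ∫⁻ z, g (x + y + z) ∂μpow (n + 1 - 1 - k) else 0)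
            ∂μ ∂μpow k := by
        rw [ih G hG]
        apply Finset.sum_congr rfl
        intro k hk
        have hkn : k < n := Finset.mem_range.1 hk
        apply lintegral_congr
        intro x
        apply lintegral_congr
        intro y
        by_cases hxy : x < t ∧ t ≤ x + y
        · rw [if_pos hxy, if_pos hxy]
          have hnk : n + 1 - 1 - k = (n - 1 - k) + 1 := by omega
          haveI := hprob (n - 1 - k)
          rw [hnk, hpowsucc (n - 1 - k),
            lconv _ _ (show Measurable fun z : ℝ => g (x + y + z) from
              hg.comp (measurable_const.add measurable_id))]
          apply lintegral_congr_ae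
          filter_upwards [hae (n - 1 - k)] with z hz
          rw [hGdef]
          simp only
          apply lintegral_congr_ae
          filter_upwards [haeμ] with w hw
          have h1 : t ≤ x + y + z + w := by linarith [hxy.2]
          rw [if_pos h1]
          ring_nf
        · rw [if_neg hxy, if_neg hxy]
      have termB : ∫⁻ x, (if x < t then G x else 0) ∂μpow n =
          ∫⁻ x, ∫⁻ y,
            (if x < t ∧ t ≤ x + y then ∫⁻ z, g (x + y + z) ∂μpow (n + 1 - 1 - n) else 0)
            ∂μ ∂μpow n := by
        apply lintegral_congr
        intro x
        have h0 : n + 1 - 1 - n = 0 := by omega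
        by_cases hx : x < t
        · rw [if_pos hx, hGdef]
          simp only
          apply lintegral_congr
          intro y
          by_cases hy : t ≤ x + y
          · rw [if_pos hy, if_pos ⟨hx, hy⟩, h0, hpow0,
              lintegral_dirac' _ (show Measurable fun z : ℝ => g (x + y + z) from
                hg.comp (measurable_const.add measurable_id))]
            rw [add_zero]
          · rw [if_neg hy, if_neg (by tauto)]
        · rw [if_neg hx]
          symm
          simp [hx]
      rw [hsplit, termA, termB, Finset.sum_range_succ]
  -- define c and d
  set c : ℕ → ENNReal := fun k =>
    ∫⁻ x, ∫⁻ y, (if x < t ∧ t ≤ x + y then 1 else 0) ∂μ ∂μpow k with hc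
  set d : ℕ → ENNReal := fun m => μpow m (Set.Icc 0 1) with hd
  have hindm : Measurable (Set.indicator (Set.Icc t (t+1)) (1 : ℝ → ENNReal)) :=
    measurable_const.indicator measurableSet_Icc
  have hitem : ∀ x : ℝ, Measurable fun y : ℝ => (if x < t ∧ t ≤ x + y then (1:ENNReal) else 0) := by
    intro x
    apply Measurable.ite _ measurable_const measurable_const
    exact (MeasurableSet.const _).inter
      (measurableSet_le measurable_const (measurable_const.add measurable_id))
  have hrepr : ∀ n, μpow n (Set.Icc t (t+1)) =
      ∑ k ∈ Finset.range n, ∫⁻ x, ∫⁻ y,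
        (if x < t ∧ t ≤ x + y then
          ∫⁻ z, Set.indicator (Set.Icc t (t+1)) 1 (x + y + z) ∂μpow (n - 1 - k) else 0)
        ∂μ ∂μpow k := by
    intro n
    haveI := hprob n
    rw [← KC n _ hindm]
    rw [← lintegral_indicator_one measurableSet_Icc]
    apply lintegral_congr
    intro s
    rcases le_or_gt t s with h | h
    · rw [if_pos h]
    · rw [if_neg (not_le.2 h), Set.indicator_of_notMem
        (by simp only [Set.mem_Icc, not_and]; intro h'; linarith)]
  have hterm_le : ∀ n k, (∫⁻ x, ∫⁻ y,
        (if x < t ∧ t ≤ x + y then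
          ∫⁻ z, Set.indicator (Set.Icc t (t+1)) 1 (x + y + z) ∂μpow (n - 1 - k) else 0)
        ∂μ ∂μpow k) ≤ c k * d (n - 1 - k) := by
    intro n k
    haveI := hprob k
    haveI := hprob (n - 1 - k)
    calc ∫⁻ x, ∫⁻ y,
          (if x < t ∧ t ≤ x + y then
            ∫⁻ z, Set.indicator (Set.Icc t (t+1)) 1 (x + y + z) ∂μpow (n - 1 - k) else 0)
          ∂μ ∂μpow k
        ≤ ∫⁻ x, ∫⁻ y, (if x < t ∧ t ≤ x + y then (1:ENNReal) else 0) * d (n - 1 - k) ∂μ ∂μpow k := by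
          apply lintegral_mono; intro x
          apply lintegral_mono; intro y
          dsimp only
          by_cases hxy : x < t ∧ t ≤ x + y
          · rw [if_pos hxy, if_pos hxy, one_mul]
            simp only [hd]
            rw [← lintegral_indicator_one (μ := μpow (n - 1 - k)) measurableSet_Icc]
            apply lintegral_mono_ae
            filter_upwards [hae (n - 1 - k)] with z hz
            by_cases hmem : x + y + z ∈ Set.Icc t (t+1)
            · rw [Set.indicator_of_mem hmem,
                Set.indicator_of_mem (by constructor <;> [exact hz; linarith [hmem.2, hxy.2]])]
              exact le_rfl
            · rw [Set.indicator_of_notMem hmem]; exact zero_le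
          · rw [if_neg hxy, if_neg hxy, zero_mul]
      _ = c k * d (n - 1 - k) := by
          have h1 : ∀ x : ℝ, (∫⁻ y, (if x < t ∧ t ≤ x + y then (1:ENNReal) else 0) * d (n - 1 - k) ∂μ)
              = (∫⁻ y, (if x < t ∧ t ≤ x + y then (1:ENNReal) else 0) ∂μ) * d (n - 1 - k) :=
            fun x => lintegral_mul_const _ (hitem x)
          simp_rw [h1]
          rw [lintegral_mul_const _ (Measurable.lintegral_prod_right'
            (f := fun p : ℝ × ℝ => if p.1 < t ∧ t ≤ p.1 + p.2 then (1:ENNReal) else 0)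
            (Measurable.ite ((measurableSet_lt measurable_fst measurable_const).inter
              (measurableSet_le measurable_const measurable_add)) measurable_const
              measurable_const))]
  have hIiom : Measurable (Set.indicator (Set.Iio t) (1 : ℝ → ENNReal)) :=
    measurable_const.indicator measurableSet_Iio
  have htel : ∀ k, c k + μpow (k+1) (Set.Iio t) = μpow k (Set.Iio t) := by
    intro k
    haveI := hprob k
    rw [hpowsucc k, ← lintegral_indicator_one (μ := (μpow k).conv μ) measurableSet_Iio,
      lconv _ _ hIiom]
    simp only [hc]
    rw [← lintegral_add_left (Measurable.lintegral_prod_right'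
      (f := fun p : ℝ × ℝ => if p.1 < t ∧ t ≤ p.1 + p.2 then (1:ENNReal) else 0)
      (Measurable.ite ((measurableSet_lt measurable_fst measurable_const).inter
        (measurableSet_le measurable_const measurable_add)) measurable_const
        measurable_const))]
    rw [← lintegral_indicator_one (μ := μpow k) measurableSet_Iio]
    apply lintegral_congr_ae
    apply Filter.Eventually.of_forall
    intro x
    dsimp only
    rw [← lintegral_add_left (hitem x)]
    have : ∫⁻ y, (if x < t then (1:ENNReal) else 0) ∂μ = if x < t then 1 else 0 := by
      rw [lintegral_const, measure_univ, mul_one]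
    rw [show Set.indicator (Set.Iio t) (1 : ℝ → ENNReal) x = if x < t then 1 else 0 by
      simp [Set.indicator_apply]]
    rw [← this]
    apply lintegral_congr_ae
    filter_upwards [haeμ] with y hy
    rw [show Set.indicator (Set.Iio t) (1 : ℝ → ENNReal) (x + y) = if x + y < t then 1 else 0 by
      simp [Set.indicator_apply]]
    rcases lt_or_ge x t with hx | hx
    · rcases lt_or_ge (x + y) t with hxy | hxy
      · rw [if_neg (by push_neg; intro; linarith), if_pos hxy, if_pos hx, zero_add]
      · rw [if_pos ⟨hx, hxy⟩, if_neg (not_lt.2 hxy), if_pos hx, add_zero]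
    · rw [if_neg (by push_neg; intro h'; exact absurd h' (not_lt.2 hx)),
        if_neg (by push_neg; linarith), if_neg (not_lt.2 hx), add_zero]
  have hb0 : μpow 0 (Set.Iio t) = 1 := by
    rw [hpow0, Measure.dirac_apply' _ measurableSet_Iio, Set.indicator_of_mem (by simpa using ht)]
    rfl
  have hcsumfin : ∀ K, (∑ k ∈ Finset.range K, c k) + μpow K (Set.Iio t) = 1 := by
    intro K
    induction K with
    | zero => simpa using hb0
    | succ K ih => rw [Finset.sum_range_succ, add_assoc, htel K, ih]
  have hcsum : ∑' k, c k ≤ 1 := by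
    rw [ENNReal.tsum_eq_iSup_sum]
    apply iSup_le
    intro s
    obtain ⟨K, hK⟩ := s.exists_nat_subset_range
    calc ∑ k ∈ s, c k ≤ ∑ k ∈ Finset.range K, c k :=
          Finset.sum_le_sum_of_subset hK
      _ ≤ 1 := by rw [← hcsumfin K]; exact le_self_add
  -- assemble
  clear_value c d
  rw [hU, Measure.sum_apply _ measurableSet_Icc, Measure.sum_apply _ measurableSet_Icc]
  calc ∑' n, μpow n (Set.Icc t (t+1))
      ≤ ∑' n, ∑ k ∈ Finset.range n, c k * d (n - 1 - k) := by
        apply ENNReal.tsum_le_tsum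
        intro n
        rw [hrepr n]
        exact Finset.sum_le_sum fun k _ => hterm_le n k
    _ = ∑' n, ∑' k, (if k < n then c k * d (n - 1 - k) else 0) := by
        apply tsum_congr
        intro n
        rw [tsum_eq_sum (f := fun k => if k < n then c k * d (n - 1 - k) else 0)
          (s := Finset.range n) (fun k hk => if_neg (by simpa using hk))]
        exact Finset.sum_congr rfl fun k hk => (if_pos (Finset.mem_range.1 hk)).symm
    _ = ∑' k, ∑' n, (if k < n then c k * d (n - 1 - k) else 0) := ENNReal.tsum_comm
    _ = ∑' k, c k * ∑' m, d m := by
        apply tsum_congr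
        intro k
        rw [← Summable.sum_add_tsum_nat_add' (f := fun n => if k < n then c k * d (n - 1 - k) else 0)
          (k := k+1) ENNReal.summable, Finset.sum_eq_zero
          (fun n hn => if_neg (by simp at hn; omega))]
        rw [zero_add, ← ENNReal.tsum_mul_left]
        apply tsum_congr
        intro m
        rw [if_pos (by omega), show m + (k+1) - 1 - k = m by omega]
    _ = (∑' k, c k) * ∑' m, d m := ENNReal.tsum_mul_right
    _ ≤ 1 * ∑' m, d m := mul_le_mul_left hcsum _
    _ = ∑' n, μpow n (Set.Icc 0 1) := by rw [one_mul, hd]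


/-- If `μ` is a probability measure on `[0,∞)` with `μ({0}) < 1` and `U = Σ_{n≥0} μ^{*n}`
is its renewal measure, then `U([0,1]) < ∞` and for every `h ≥ 0`,
`U([0,h]) ≤ (⌊h⌋ + 1) · U([0,1])`; in particular `U([0,h])` grows at most linearly in `h`. -/
theorem renewal_measure_linear_growth
    (μ : Measure ℝ) [IsProbabilityMeasure μ]
    (hsupp : μ (Set.Iio 0) = 0)
    (hzero : μ {0} < 1)
    (μpow : ℕ → Measure ℝ)
    (hpow0 : μpow 0 = Measure.dirac 0)
    (hpowsucc : ∀ n, μpow (n + 1) = (μpow n).conv μ)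
    (U : Measure ℝ) (hU : U = Measure.sum μpow) :
    U (Set.Icc 0 1) < ⊤ ∧
      ∀ h : ℝ, 0 ≤ h →
        U (Set.Icc 0 h) ≤ ((⌊h⌋₊ : ENNReal) + 1) * U (Set.Icc 0 1) := by
  constructor
  · exact renewal_aux_fin μ hsupp hzero μpow hpow0 hpowsucc U hU
  · intro h hh
    have key : ∀ t : ℝ, 0 < t → U (Set.Icc t (t+1)) ≤ U (Set.Icc 0 1) := fun t ht =>
      renewal_aux_shift μ hsupp μpow hpow0 hpowsucc U hU t ht
    have hcover : Set.Icc (0:ℝ) h ⊆ ⋃ j ∈ Finset.range (⌊h⌋₊ + 1), Set.Icc (j:ℝ) (j+1) := by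
      intro x hx
      refine Set.mem_biUnion (Finset.mem_range.2 (Nat.lt_succ_of_le (Nat.floor_le_floor hx.2))) ?_
      exact ⟨Nat.floor_le hx.1, (Nat.lt_floor_add_one x).le⟩
    calc U (Set.Icc 0 h) ≤ ∑ j ∈ Finset.range (⌊h⌋₊ + 1), U (Set.Icc (j:ℝ) (j+1)) :=
          (measure_mono hcover).trans (measure_biUnion_finset_le _ _)
      _ ≤ ∑ _j ∈ Finset.range (⌊h⌋₊ + 1), U (Set.Icc 0 1) := by
          apply Finset.sum_le_sum
          intro j _
          rcases Nat.eq_zero_or_pos j with rfl | hj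
          · norm_num
          · exact key j (by exact_mod_cast hj)
      _ = ((⌊h⌋₊ : ENNReal) + 1) * U (Set.Icc 0 1) := by
          rw [Finset.sum_const, Finset.card_range, nsmul_eq_mul]
          push_cast
          ring
end
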